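/- Suppose YX − XY ∈ 𝔰 holds for all X ∈ 𝔰. Then H = {ε·exp(rY)·(I_d + X) : ε ∈ {±1}, r ∈ ℝ, X ∈ 𝔰} is a subgroup of GL(d,ℝ), and the representation of its elements is unique: if ε·exp(rY)·(I_d + X) = ε'·exp(r'Y)·(I_d + X') with ε, ε' ∈ {±1}, r, r' ∈ ℝ and X, X' ∈ 𝔰, then ε = ε', r = r' and X = X'. -/

import Mathlib

open Matrix

/-- The shearlet dilation group
`H = {ε·exp(rY)·(I_d + X) : ε ∈ {±1}, r ∈ ℝ, X ∈ 𝔰}`, where `Y = diag(1, λ_2, …, λ_d)`. -/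
def shearletGroupSet (d : ℕ) (lam : Fin d → ℝ)
    (𝔰 : Submodule ℝ (Matrix (Fin d) (Fin d) ℝ)) : Set (Matrix (Fin d) (Fin d) ℝ) :=
  {h | ∃ ε r : ℝ, ∃ Z ∈ 𝔰, (ε = 1 ∨ ε = -1) ∧
    h = ε • (NormedSpace.exp (r • Matrix.diagonal lam) * (1 + Z))}

/-- The exponential of `s • diagonal lam` is the diagonal matrix of entrywise exponentials. -/
lemma shearlet_expDiag {d : ℕ} (lam : Fin d → ℝ) (s : ℝ) :
    NormedSpace.exp (s • Matrix.diagonal lam) =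
      Matrix.diagonal (fun i => Real.exp (s * lam i)) := by
  rw [← Matrix.diagonal_smul, Matrix.exp_diagonal]
  congr 1
  funext i
  rw [Pi.exp_def]
  simp [Real.exp_eq_exp_ℝ, smul_eq_mul]

/-- Invariance of `𝔰` under entrywise scaling by `f (lam j - lam k)`. -/
lemma shearlet_scale_mem {d : ℕ} (lam : Fin d → ℝ)
    (𝔰 : Submodule ℝ (Matrix (Fin d) (Fin d) ℝ))
    (hcomm : ∀ Z ∈ 𝔰, Matrix.diagonal lam * Z - Z * Matrix.diagonal lam ∈ 𝔰)
    (f : ℝ → ℝ) (Z : Matrix (Fin d) (Fin d) ℝ) (hZ : Z ∈ 𝔰) :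
    (Matrix.of fun j k => f (lam j - lam k) * Z j k) ∈ 𝔰 := by
  classical
  set A : ℝ → Matrix (Fin d) (Fin d) ℝ → Matrix (Fin d) (Fin d) ℝ :=
    fun ν X => Matrix.diagonal lam * X - X * Matrix.diagonal lam - ν • X with hA
  have hAmem : ∀ ν X, X ∈ 𝔰 → A ν X ∈ 𝔰 := fun ν X hX =>
    Submodule.sub_mem _ (hcomm X hX) (Submodule.smul_mem _ _ hX)
  have hAentry : ∀ ν X (j k : Fin d), A ν X j k = (lam j - lam k - ν) * X j k := by
    intro ν X j k
    simp only [hA, Matrix.sub_apply, Matrix.smul_apply, Matrix.diagonal_mul,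
      Matrix.mul_diagonal, smul_eq_mul]
    ring
  set app : List ℝ → Matrix (Fin d) (Fin d) ℝ → Matrix (Fin d) (Fin d) ℝ :=
    fun l X => l.foldr A X with happ
  have happmem : ∀ l X, X ∈ 𝔰 → app l X ∈ 𝔰 := by
    intro l
    induction l with
    | nil => intro X hX; exact hX
    | cons ν l ih => intro X hX; exact hAmem ν _ (ih X hX)
  have happentry : ∀ l X (j k : Fin d),
      app l X j k = (l.map fun ν => lam j - lam k - ν).prod * X j k := by
    intro l
    induction l with
    | nil => intro X j k; simp [happ]
    | cons ν l ih =>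
      intro X j k
      show A ν (app l X) j k = _
      rw [hAentry, ih]
      simp [List.prod_cons]
      ring
  set T : Finset ℝ := Finset.image (fun p : Fin d × Fin d => lam p.1 - lam p.2) Finset.univ
    with hT
  have key : (Matrix.of fun j k => f (lam j - lam k) * Z j k) =
      ∑ μ ∈ T, (f μ * (∏ ν ∈ T.erase μ, (μ - ν))⁻¹) • app (T.erase μ).toList Z := by
    ext j k
    rw [Matrix.sum_apply]
    have hμ₀ : lam j - lam k ∈ T := Finset.mem_image.2 ⟨(j, k), Finset.mem_univ _, rfl⟩
    rw [Finset.sum_eq_single (lam j - lam k)]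
    · rw [Matrix.smul_apply, happentry, Finset.prod_map_toList, smul_eq_mul]
      have hne : (∏ ν ∈ T.erase (lam j - lam k), (lam j - lam k - ν)) ≠ 0 :=
        Finset.prod_ne_zero_iff.2 fun ν hν =>
          sub_ne_zero.2 (Ne.symm (Finset.ne_of_mem_erase hν))
      rw [Matrix.of_apply]
      field_simp
    · intro μ hμT hμne
      have h0 : (∏ ν ∈ (T.erase μ).toList.toFinset, (lam j - lam k - ν)) = 0 := by
        apply Finset.prod_eq_zero (i := lam j - lam k)
        · rw [Finset.toList_toFinset]
          exact Finset.mem_erase.2 ⟨Ne.symm hμne, hμ₀⟩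
        · exact sub_self _
      rw [Matrix.smul_apply, happentry, Finset.prod_map_toList, smul_eq_mul]
      rw [Finset.prod_eq_zero (Finset.mem_erase.2 ⟨Ne.symm hμne, hμ₀⟩) (sub_self _)]
      ring
    · intro h; exact absurd hμ₀ h
  rw [key]
  exact Submodule.sum_mem _ fun μ _ => Submodule.smul_mem _ _ (happmem _ _ hZ)

/-- Powers of a strictly upper triangular matrix vanish below the shifted diagonal. -/
lemma shearlet_strict_pow {d : ℕ} (Z : Matrix (Fin d) (Fin d) ℝ)
    (h : ∀ j k : Fin d, k ≤ j → Z j k = 0) :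
    ∀ n (j k : Fin d), (k : ℕ) < (j : ℕ) + n → (Z ^ n) j k = 0 := by
  intro n
  induction n with
  | zero =>
    intro j k hk
    rw [pow_zero]
    exact Matrix.one_apply_ne (by intro he; rw [he] at hk; omega)
  | succ n ih =>
    intro j k hk
    rw [pow_succ, Matrix.mul_apply]
    apply Finset.sum_eq_zero
    intro m _
    by_cases hm : (m : ℕ) < (j : ℕ) + n
    · rw [ih j m hm, zero_mul]
    · have hkm : k ≤ m := by
        rw [Fin.le_def]; omega
      rw [h m k hkm, mul_zero]

set_option maxHeartbeats 1000000 in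
theorem statement3 (d : ℕ) [NeZero d] (hd : 2 ≤ d)
    (𝔰 : Submodule ℝ (Matrix (Fin d) (Fin d) ℝ))
    (hupper : ∀ X ∈ 𝔰, ∀ j k : Fin d, k ≤ j → X j k = 0)
    (hmulclosed : ∀ X ∈ 𝔰, ∀ Y ∈ 𝔰, X * Y ∈ 𝔰)
    (lam : Fin d → ℝ) (hlam0 : lam 0 = 1)
    (hcomm : ∀ Z ∈ 𝔰, Matrix.diagonal lam * Z - Z * Matrix.diagonal lam ∈ 𝔰) :
    (∃ H : Subgroup (GL (Fin d) ℝ), ∀ g : GL (Fin d) ℝ,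
      g ∈ H ↔ (g : Matrix (Fin d) (Fin d) ℝ) ∈ shearletGroupSet d lam 𝔰) ∧
    (∀ (ε ε' r r' : ℝ) (Z Z' : Matrix (Fin d) (Fin d) ℝ),
      (ε = 1 ∨ ε = -1) → (ε' = 1 ∨ ε' = -1) → Z ∈ 𝔰 → Z' ∈ 𝔰 →
      ε • (NormedSpace.exp (r • Matrix.diagonal lam) * (1 + Z)) =
        ε' • (NormedSpace.exp (r' • Matrix.diagonal lam) * (1 + Z')) →
      ε = ε' ∧ r = r' ∧ Z = Z') := by
  classical
  set E : ℝ → Matrix (Fin d) (Fin d) ℝ :=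
    fun s => Matrix.diagonal fun i => Real.exp (s * lam i) with hEdef
  have hE : ∀ s : ℝ, NormedSpace.exp (s • Matrix.diagonal lam) = E s :=
    fun s => shearlet_expDiag lam s
  have hEmul : ∀ s t : ℝ, E s * E t = E (s + t) := by
    intro s t
    simp only [hEdef]
    have hfun : (fun i : Fin d => Real.exp (s * lam i) * Real.exp (t * lam i))
        = fun i : Fin d => Real.exp ((s + t) * lam i) := by
      funext i
      rw [← Real.exp_add]
      ring_nf
    rw [Matrix.diagonal_mul_diagonal, hfun]
  have hEone : E 0 = 1 := by
    simp only [hEdef]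
    have : (fun i => Real.exp (0 * lam i)) = fun _ : Fin d => (1 : ℝ) := by
      funext i; simp
    rw [this, Matrix.diagonal_one]
  have hcancel : ∀ s : ℝ, E s * E (-s) = 1 := by
    intro s; rw [hEmul, show s + -s = 0 by ring, hEone]
  have hconj : ∀ (s : ℝ) (Z : Matrix (Fin d) (Fin d) ℝ),
      E s * Z * E (-s) = Matrix.of fun j k => Real.exp (s * (lam j - lam k)) * Z j k := by
    intro s Z
    ext j k
    simp only [hEdef, Matrix.mul_diagonal, Matrix.diagonal_mul, Matrix.of_apply]
    rw [mul_right_comm, ← Real.exp_add, show s * lam j + -s * lam k = s * (lam j - lam k) by ring]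
  have hconjmem : ∀ (s : ℝ) (Z : Matrix (Fin d) (Fin d) ℝ), Z ∈ 𝔰 →
      E s * Z * E (-s) ∈ 𝔰 := by
    intro s Z hZ
    rw [hconj]
    exact shearlet_scale_mem lam 𝔰 hcomm (fun x => Real.exp (s * x)) Z hZ
  have hmove : ∀ (s : ℝ) (Z : Matrix (Fin d) (Fin d) ℝ),
      (1 + Z) * E s = E s * (1 + E (-s) * Z * E s) := by
    intro s Z
    have h1 : E s * (E (-s) * Z * E s) = Z * E s := by
      rw [show E s * (E (-s) * Z * E s) = (E s * E (-s)) * Z * E s by noncomm_ring,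
        hcancel, one_mul]
    rw [mul_add, mul_one, h1, add_mul, one_mul]
  -- inverse of 1 + Z within 1 + 𝔰
  have hinv : ∀ Z ∈ 𝔰, ∃ N ∈ 𝔰, (1 + Z) * (1 + N) = 1 ∧ (1 + N) * (1 + Z) = 1 := by
    intro Z hZ
    have hZd : (-Z) ^ d = 0 := by
      ext j k
      apply shearlet_strict_pow
      · intro j' k' hle
        simp [hupper Z hZ j' k' hle]
      · calc (k : ℕ) < d := k.isLt
          _ ≤ (j : ℕ) + d := Nat.le_add_left _ _
    have hpowmem : ∀ n : ℕ, (-Z) ^ (n + 1) ∈ 𝔰 := by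
      intro n
      induction n with
      | zero => simpa using Submodule.neg_mem _ hZ
      | succ n ih =>
        rw [pow_succ]
        exact hmulclosed _ ih _ (Submodule.neg_mem _ hZ)
    set N : Matrix (Fin d) (Fin d) ℝ := ∑ i ∈ Finset.range (d - 1), (-Z) ^ (i + 1) with hN
    have hNmem : N ∈ 𝔰 := Submodule.sum_mem _ fun i _ => hpowmem i
    have hS : (∑ i ∈ Finset.range d, (-Z) ^ i) = 1 + N := by
      rw [show Finset.range d = Finset.range ((d - 1) + 1) by
        rw [Nat.sub_add_cancel (by omega)], Finset.sum_range_succ']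
      simp [hN, add_comm]
    have hgeom := geom_sum_mul (-Z) d
    rw [hZd, hS] at hgeom
    -- hgeom : (1 + N) * (-Z - 1) = 0 - 1
    have h1 : (1 + N) * (1 + Z) = 1 := by
      have h2 : -((1 + N) * (1 + Z)) = -1 := by
        calc -((1 + N) * (1 + Z)) = (1 + N) * (-Z - 1) := by noncomm_ring
          _ = 0 - 1 := hgeom
          _ = -1 := zero_sub 1
      exact neg_injective h2
    have hgeom' := mul_geom_sum (-Z) d
    rw [hZd, hS] at hgeom'
    have h2 : (1 + Z) * (1 + N) = 1 := by
      have h3 : -((1 + Z) * (1 + N)) = -1 := by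
        calc -((1 + Z) * (1 + N)) = (-Z - 1) * (1 + N) := by noncomm_ring
          _ = 0 - 1 := hgeom'
          _ = -1 := zero_sub 1
      exact neg_injective h3
    exact ⟨N, hNmem, h2, h1⟩
  -- the subgroup
  have hmulset : ∀ a b : Matrix (Fin d) (Fin d) ℝ,
      a ∈ shearletGroupSet d lam 𝔰 → b ∈ shearletGroupSet d lam 𝔰 →
      a * b ∈ shearletGroupSet d lam 𝔰 := by
    rintro a b ⟨ε, r, Z, hZ, hε, ha⟩ ⟨ε', r', Z', hZ', hε', hb⟩
    rw [hE] at ha hb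
    set V : Matrix (Fin d) (Fin d) ℝ := E (-r') * Z * E r' with hV
    have hVmem : V ∈ 𝔰 := by
      have := hconjmem (-r') Z hZ
      rwa [neg_neg] at this
    refine ⟨ε * ε', r + r', V + Z' + V * Z',
      Submodule.add_mem _ (Submodule.add_mem _ hVmem hZ') (hmulclosed _ hVmem _ hZ'),
      ?_, ?_⟩
    · rcases hε with h | h <;> rcases hε' with h' | h' <;> subst h <;> subst h' <;> norm_num
    · rw [hE, ha, hb, smul_mul_smul_comm]
      congr 1
      calc E r * (1 + Z) * (E r' * (1 + Z'))
          = E r * ((1 + Z) * E r') * (1 + Z') := by noncomm_ring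
        _ = E r * (E r' * (1 + V)) * (1 + Z') := by rw [hmove r' Z]
        _ = (E r * E r') * ((1 + V) * (1 + Z')) := by noncomm_ring
        _ = E (r + r') * (1 + (V + Z' + V * Z')) := by rw [hEmul]; congr 1; noncomm_ring
  have honeset : (1 : Matrix (Fin d) (Fin d) ℝ) ∈ shearletGroupSet d lam 𝔰 := by
    refine ⟨1, 0, 0, Submodule.zero_mem _, Or.inl rfl, ?_⟩
    rw [hE, hEone]
    simp
  have hinvset : ∀ (g : GL (Fin d) ℝ),
      (g : Matrix (Fin d) (Fin d) ℝ) ∈ shearletGroupSet d lam 𝔰 →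
      ((g⁻¹ : GL (Fin d) ℝ) : Matrix (Fin d) (Fin d) ℝ) ∈ shearletGroupSet d lam 𝔰 := by
    rintro g ⟨ε, r, Z, hZ, hε, hval⟩
    rw [hE] at hval
    obtain ⟨N, hN, hZN, hNZ⟩ := hinv Z hZ
    set W : Matrix (Fin d) (Fin d) ℝ := E r * N * E (-r) with hW
    have hWmem : W ∈ 𝔰 := hconjmem r N hN
    have hcand : (g : Matrix (Fin d) (Fin d) ℝ) * (ε • (E (-r) * (1 + W))) = 1 := by
      have hε2 : ε * ε = 1 := by rcases hε with h | h <;> subst h <;> norm_num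
      have hEW : E (-r) * (1 + W) = (1 + N) * E (-r) := by
        rw [hmove (-r) N]
        congr 2
        rw [hW, neg_neg]
      rw [hval, smul_mul_smul_comm, hε2, hEW]
      calc (1 : ℝ) • (E r * (1 + Z) * ((1 + N) * E (-r)))
          = E r * ((1 + Z) * (1 + N)) * E (-r) := by rw [one_smul]; noncomm_ring
        _ = E r * E (-r) := by rw [hZN, mul_one]
        _ = 1 := hcancel r
    have hginv : ((g⁻¹ : GL (Fin d) ℝ) : Matrix (Fin d) (Fin d) ℝ)
        = ε • (E (-r) * (1 + W)) := by
      rw [Matrix.coe_units_inv]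
      exact Matrix.inv_eq_right_inv hcand
    exact ⟨ε, -r, W, hWmem, hε, by rw [hginv, hE]⟩
  constructor
  · refine ⟨⟨⟨⟨{g : GL (Fin d) ℝ | (g : Matrix (Fin d) (Fin d) ℝ) ∈ shearletGroupSet d lam 𝔰},
      ?_⟩, ?_⟩, ?_⟩, fun g => Iff.rfl⟩
    · intro a b ha hb
      show ((a * b : GL (Fin d) ℝ) : Matrix (Fin d) (Fin d) ℝ) ∈ shearletGroupSet d lam 𝔰
      rw [Units.val_mul]
      exact hmulset _ _ ha hb
    · show ((1 : GL (Fin d) ℝ) : Matrix (Fin d) (Fin d) ℝ) ∈ shearletGroupSet d lam 𝔰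
      rw [Units.val_one]
      exact honeset
    · intro g hg
      exact hinvset g hg
  -- uniqueness
  · intro ε ε' r r' Z Z' hε hε' hZ hZ' heq
    rw [hE, hE] at heq
    have h00 : ε * Real.exp r = ε' * Real.exp r' := by
      have h := Matrix.ext_iff.2 heq 0 0
      simp only [Matrix.smul_apply, smul_eq_mul, hEdef, Matrix.diagonal_mul,
        Matrix.add_apply, Matrix.one_apply_eq, hupper Z hZ 0 0 le_rfl,
        hupper Z' hZ' 0 0 le_rfl, add_zero, mul_one, hlam0] at h
      exact h
    have hsign : ε = ε' := by
      rcases hε with h | h <;> rcases hε' with h' | h' <;> subst h <;> subst h' <;>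
        first
        | rfl
        | (exfalso; nlinarith [Real.exp_pos r, Real.exp_pos r', h00])
    subst hsign
    have hεne : ε ≠ 0 := by rcases hε with h | h <;> subst h <;> norm_num
    have hr : r = r' := Real.exp_injective (mul_left_cancel₀ hεne h00)
    subst hr
    refine ⟨rfl, rfl, ?_⟩
    have h2 : E r * (1 + Z) = E r * (1 + Z') := by
      rcases hε with h | h <;> subst h
      · simpa using heq
      · have := heq
        rw [neg_one_smul, neg_one_smul] at this
        exact neg_injective this
    have h3 : (1 : Matrix (Fin d) (Fin d) ℝ) + Z = 1 + Z' := by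
      have h4 := congrArg (fun A => E (-r) * A) h2
      rwa [← mul_assoc, ← mul_assoc, show E (-r) * E r = 1 by
        rw [hEmul, show -r + r = 0 by ring, hEone], one_mul, one_mul] at h4
    exact add_left_cancel h3
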